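/- Let S be a finite totally ordered set, s₀ ∈ S, and a,b,c ∈ S−{s₀} distinct. Then in the polynomial ring R_{0,S} (over any commutative ring R with unity) one has the identity E^S_{abc} = E^S_{s₀bc} + E^S_{bas₀} − E^S_{cas₀}. Consequently, the collection of all elements E^S_{abc} (a,b,c ∈ S distinct) is contained in the R-linear span of the subcollection of those in which s₀ occurs among the three indices. -/
import Mathlib


open MvPolynomial Finset TensorProduct

noncomputable section

/-- `[ℓ] = {1, …, ℓ}`. -/
abbrev Iset (n : ℕ) : Finset ℕ := Finset.Icc 1 n

/-! ### The "complex" rings `R_S = R[(D_{J,K})_{{J,K} ∈ P•(S)}]`.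
An unordered pair `{J,K}` with `J ⊔ K = S` and `2 ≤ |J| ≤ |S|-2` is represented by
its unique member containing `min S`. -/

/-- Index type for the variables `D_{J,K}`, `{J,K} ∈ P•(S)`: the canonical member
of the pair is the one whose minimum is `min S`. -/
abbrev CxIdx (S : Finset ℕ) : Type :=
  {J : Finset ℕ // J ⊆ S ∧ 2 ≤ J.card ∧ 2 ≤ (S \ J).card ∧ J.min = S.min}

/-- The polynomial ring `R_S` on the variables `D_{J,K}`, `{J,K} ∈ P•(S)`. -/
abbrev CxRing (R : Type) [CommRing R] (S : Finset ℕ) : Type := MvPolynomial (CxIdx S) R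

def cxXv (R : Type) [CommRing R] (S J : Finset ℕ) : CxRing R S :=
  if h : J ⊆ S ∧ 2 ≤ J.card ∧ 2 ≤ (S \ J).card ∧ J.min = S.min then X ⟨J, h⟩ else 0

/-- The variable `D_{J,K}` of `R_S` (equal to `0` if `{J,K} ∉ P•(S)`). -/
def cxD (R : Type) [CommRing R] (S J K : Finset ℕ) : CxRing R S :=
  if Disjoint J K ∧ J ∪ K = S then (if J.min ≤ K.min then cxXv R S J else cxXv R S K)
  else 0

/-- `{J,K} ⋂̸ {J',K'}`:  `J ⊄ J'`, `J ⊄ K'`, `J' ⊄ J` and `K' ⊄ J`. -/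
abbrev NcapCx (J J' K' : Finset ℕ) : Prop :=
  ¬ J ⊆ J' ∧ ¬ J ⊆ K' ∧ ¬ J' ⊆ J ∧ ¬ K' ⊆ J

/-- The element `R^S_{abcd}`. -/
def cxRel (R : Type) [CommRing R] (S : Finset ℕ) (a b c d : ℕ) : CxRing R S :=
  (∑ J ∈ S.powerset,
    if 2 ≤ J.card ∧ 2 ≤ (S \ J).card ∧ a ∈ J ∧ b ∈ J ∧ c ∈ S \ J ∧ d ∈ S \ J
    then cxD R S J (S \ J) else 0)
  - ∑ J ∈ S.powerset,
    if 2 ≤ J.card ∧ 2 ≤ (S \ J).card ∧ a ∈ J ∧ c ∈ J ∧ b ∈ S \ J ∧ d ∈ S \ J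
    then cxD R S J (S \ J) else 0

/-- The ideal `I_S ⊂ R_S`. -/
def cxIdeal (R : Type) [CommRing R] (S : Finset ℕ) : Ideal (CxRing R S) :=
  Ideal.span (
    {x | ∃ J K J' K' : Finset ℕ,
      (Disjoint J K ∧ J ∪ K = S ∧ 2 ≤ J.card ∧ 2 ≤ K.card) ∧
      (Disjoint J' K' ∧ J' ∪ K' = S ∧ 2 ≤ J'.card ∧ 2 ≤ K'.card) ∧
      NcapCx J J' K' ∧ x = cxD R S J K * cxD R S J' K'} ∪
    {x | ∃ a b c d : ℕ, a ∈ S ∧ b ∈ S ∧ c ∈ S ∧ d ∈ S ∧ a ≠ b ∧ c ≠ d ∧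
      x = cxRel R S a b c d})

/-- The homomorphism `F : R_{[ℓ]} → R_{[ℓ+1]}`, `D_{J,K} ↦ D_{J∪{ℓ+1},K} + D_{J,K∪{ℓ+1}}`. -/
def Fcx (R : Type) [CommRing R] (ℓ : ℕ) : CxRing R (Iset ℓ) →ₐ[R] CxRing R (Iset (ℓ + 1)) :=
  aeval fun i =>
    cxD R (Iset (ℓ + 1)) (i.1 ∪ {ℓ + 1}) (Iset ℓ \ i.1)
    + cxD R (Iset (ℓ + 1)) i.1 ((Iset ℓ \ i.1) ∪ {ℓ + 1})

/-- The homomorphism `F_P : R_{{nd}⊔B} → R_{[ℓ]}`, `D_{J',K'} ↦ D_{P∪(J'-{nd}),K'}` for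
`nd ∈ J'`; here `nd = 0`. -/
def FJcx (R : Type) [CommRing R] (ℓ : ℕ) (P B : Finset ℕ) :
    CxRing R (insert 0 B) →ₐ[R] CxRing R (Iset ℓ) :=
  aeval fun i => cxD R (Iset ℓ) (P ∪ i.1.erase 0) (insert 0 B \ i.1)

/-- The homomorphism `F_{J,K} : R_{{nd}⊔J} ⊗ R_{{nd}⊔K} → R_{[ℓ]}` acting by `F_K` on the
first factor and by `F_J` on the second. -/
def FJKcx (R : Type) [CommRing R] (ℓ : ℕ) (J K : Finset ℕ) :
    TensorProduct R (CxRing R (insert 0 J)) (CxRing R (insert 0 K)) →ₐ[R] CxRing R (Iset ℓ) :=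
  Algebra.TensorProduct.productMap (FJcx R ℓ K J) (FJcx R ℓ J K)

/-- The submodule `A ⊗ I_B + I_A ⊗ B` of `A ⊗_R B`. -/
def mixedSub (R : Type) [CommRing R] {A B : Type} [CommRing A] [CommRing B]
    [Algebra R A] [Algebra R B] (IA : Ideal A) (IB : Ideal B) :
    Submodule R (TensorProduct R A B) :=
  Submodule.span R
    ({x | ∃ p q, q ∈ IB ∧ x = p ⊗ₜ[R] q} ∪ {x | ∃ p q, p ∈ IA ∧ x = p ⊗ₜ[R] q})

/-! ### The "real" rings `R_{0,S}` with variables `ℝE_{J,K}`, `{J,K} ∈ P(S)`, and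
`ℝD_{I;J,K}`, `(I,{J,K}) ∈ P̃•(S)`.  The unordered pair `{J,K}` is represented by
its member whose minimum equals the minimum of `J ∪ K`. -/

abbrev EIdx (S : Finset ℕ) : Type := {J : Finset ℕ // J ⊆ S ∧ J.min = S.min}

abbrev DIdx (S : Finset ℕ) : Type :=
  {p : Finset ℕ × Finset ℕ //
    p.1 ⊆ S ∧ p.2 ⊆ S \ p.1 ∧ 1 ≤ p.1.card ∧ 2 ≤ (S \ p.1).card ∧ p.2.min = (S \ p.1).min}

/-- The polynomial ring `R_{0,S}`. -/
abbrev RRing (R : Type) [CommRing R] (S : Finset ℕ) : Type :=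
  MvPolynomial (EIdx S ⊕ DIdx S) R

def reXe (R : Type) [CommRing R] (S J : Finset ℕ) : RRing R S :=
  if h : J ⊆ S ∧ J.min = S.min then X (Sum.inl ⟨J, h⟩) else 0

/-- The variable `ℝE_{J,K}` of `R_{0,S}` (equal to `0` if `{J,K} ∉ P(S)`). -/
def reE (R : Type) [CommRing R] (S J K : Finset ℕ) : RRing R S :=
  if Disjoint J K ∧ J ∪ K = S then (if J.min ≤ K.min then reXe R S J else reXe R S K)
  else 0

def reXd (R : Type) [CommRing R] (S I J : Finset ℕ) : RRing R S :=
  if h : I ⊆ S ∧ J ⊆ S \ I ∧ 1 ≤ I.card ∧ 2 ≤ (S \ I).card ∧ J.min = (S \ I).min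
  then X (Sum.inr ⟨(I, J), h⟩) else 0

/-- The variable `ℝD_{I;J,K}` of `R_{0,S}` (equal to `0` if `(I,{J,K}) ∉ P̃•(S)`). -/
def reD (R : Type) [CommRing R] (S I J K : Finset ℕ) : RRing R S :=
  if Disjoint I (J ∪ K) ∧ Disjoint J K ∧ I ∪ (J ∪ K) = S then
    (if J.min ≤ K.min then reXd R S I J else reXd R S I K)
  else 0

/-- The sign `ε_{J,K}`: `1` if `min (J ∪ K) ∈ J` and `-1` otherwise. -/
def epsm (J K : Finset ℕ) : ℤ := if J.min ≤ K.min then 1 else -1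

/-- `{J,K} ⪯ {J',K'}`. -/
abbrev preceq (J K J' K' : Finset ℕ) : Prop := (J ⊆ J' ∧ K ⊆ K') ∨ (J ⊆ K' ∧ K ⊆ J')

/-- `{J,K} ∈ P(S)`. -/
abbrev validE (S J K : Finset ℕ) : Prop := Disjoint J K ∧ J ∪ K = S

/-- `(I,{J,K}) ∈ P̃•(S)`. -/
abbrev validD (S I J K : Finset ℕ) : Prop :=
  Disjoint I (J ∪ K) ∧ Disjoint J K ∧ I ∪ (J ∪ K) = S ∧ 1 ≤ I.card ∧ 2 ≤ (J ∪ K).card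

/-- The element `E^S_{abc}`. -/
def relE (R : Type) [CommRing R] (S : Finset ℕ) (a b c : ℕ) : RRing R S :=
  (∑ I ∈ S.powerset, ∑ J ∈ (S \ I).powerset,
    if 1 ≤ I.card ∧ 2 ≤ (S \ I).card ∧ a ∈ J ∧ b ∈ J ∧ c ∈ I
    then epsm J ((S \ I) \ J) • reD R S I J ((S \ I) \ J) else 0)
  - (∑ I ∈ S.powerset, ∑ J ∈ (S \ I).powerset,
    if 1 ≤ I.card ∧ 2 ≤ (S \ I).card ∧ a ∈ J ∧ c ∈ J ∧ b ∈ I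
    then epsm J ((S \ I) \ J) • reD R S I J ((S \ I) \ J) else 0)
  - ∑ I ∈ S.powerset, ∑ J ∈ (S \ I).powerset,
    if 1 ≤ I.card ∧ 2 ≤ (S \ I).card ∧ a ∈ I ∧ b ∈ J ∧ c ∈ (S \ I) \ J
    then epsm J ((S \ I) \ J) • reD R S I J ((S \ I) \ J) else 0

/-- The element `Σ_{{J,K} ∈ P(S)} ℝE_{J,K}`. -/
def relEsum (R : Type) [CommRing R] (S : Finset ℕ) : RRing R S :=
  ∑ J ∈ S.powerset.filter (fun J => J.min = S.min), reE R S J (S \ J)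

/-- The ideal `I_{0,S} ⊂ R_{0,S}`. -/
def reIdeal (R : Type) [CommRing R] (S : Finset ℕ) : Ideal (RRing R S) :=
  Ideal.span (
    {x | ∃ J K J' K' : Finset ℕ, validE S J K ∧ validE S J' K' ∧
      x = reE R S J K * reE R S J' K'} ∪
    {x | ∃ J K I' J' K' : Finset ℕ, validE S J K ∧ validD S I' J' K' ∧
      ¬ preceq J' K' J K ∧ x = reE R S J K * reD R S I' J' K'} ∪
    {x | ∃ I J K I' J' K' : Finset ℕ, validD S I J K ∧ validD S I' J' K' ∧
      ¬ preceq J K J' K' ∧ ¬ preceq J' K' J K ∧ ¬ J ∪ K ⊆ I' ∧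
      x = reD R S I J K * reD R S I' J' K'} ∪
    {relEsum R S} ∪
    {x | ∃ a b c : ℕ, a ∈ S ∧ b ∈ S ∧ c ∈ S ∧ a ≠ b ∧ a ≠ c ∧ b ≠ c ∧
      x = relE R S a b c})

/-- The element `G_{abc}` of Remark `RcM04rel_e2b2`. -/
def relG (R : Type) [CommRing R] (S : Finset ℕ) (a b c : ℕ) : RRing R S :=
  (∑ I ∈ S.powerset, ∑ J ∈ (S \ I).powerset,
    if 1 ≤ I.card ∧ 2 ≤ (S \ I).card ∧ a ∈ J ∧ b ∉ I ∧ c ∈ I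
    then epsm J ((S \ I) \ J) • reD R S I J ((S \ I) \ J) else 0)
  - ∑ I ∈ S.powerset, ∑ J ∈ (S \ I).powerset,
    if 1 ≤ I.card ∧ 2 ≤ (S \ I).card ∧ a ∈ J ∧ b ∈ I ∧ c ∉ I
    then epsm J ((S \ I) \ J) • reD R S I J ((S \ I) \ J) else 0

/-- The homomorphism `F : R_{0,[ℓ]} → R_{0,[ℓ+1]}`. -/
def Fre (R : Type) [CommRing R] (ℓ : ℕ) : RRing R (Iset ℓ) →ₐ[R] RRing R (Iset (ℓ + 1)) :=
  aeval fun ix =>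
    match ix with
    | Sum.inl e =>
        reE R (Iset (ℓ + 1)) (e.1 ∪ {ℓ + 1}) (Iset ℓ \ e.1)
        + reE R (Iset (ℓ + 1)) e.1 ((Iset ℓ \ e.1) ∪ {ℓ + 1})
    | Sum.inr d =>
        reD R (Iset (ℓ + 1)) (d.1.1 ∪ {ℓ + 1}) d.1.2 ((Iset ℓ \ d.1.1) \ d.1.2)
        + reD R (Iset (ℓ + 1)) d.1.1 (d.1.2 ∪ {ℓ + 1}) ((Iset ℓ \ d.1.1) \ d.1.2)
        + reD R (Iset (ℓ + 1)) d.1.1 d.1.2 (((Iset ℓ \ d.1.1) \ d.1.2) ∪ {ℓ + 1})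

/-- `ℝẼ⁰_{J,K} = ℝD_{{ℓ+1};J,K} ∈ R_{0,[ℓ+1]}`. -/
def reEt0 (R : Type) [CommRing R] (ℓ : ℕ) (J K : Finset ℕ) : RRing R (Iset (ℓ + 1)) :=
  reD R (Iset (ℓ + 1)) {ℓ + 1} J K

/-- `ℝẼ⁻_{J,K} = ℝE_{J,K∪{ℓ+1}} ∈ R_{0,[ℓ+1]}`. -/
def reEtm (R : Type) [CommRing R] (ℓ : ℕ) (J K : Finset ℕ) : RRing R (Iset (ℓ + 1)) :=
  reE R (Iset (ℓ + 1)) J (K ∪ {ℓ + 1})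

/-- `ℝD̃⁰_{I;J,K} ∈ R_{0,[ℓ+1]}` (for `(I,{J,K})` written with `min (J∪K) ∈ J`). -/
def reDt0 (R : Type) [CommRing R] (ℓ : ℕ) (I J K : Finset ℕ) : RRing R (Iset (ℓ + 1)) :=
  if 1 ∈ I then reD R (Iset (ℓ + 1)) I (J ∪ {ℓ + 1}) K
  else reD R (Iset (ℓ + 1)) (I ∪ {ℓ + 1}) J K

/-- `ℝD̃⁻_{I;J,K} = ℝD_{I;J,K∪{ℓ+1}} ∈ R_{0,[ℓ+1]}`. -/
def reDtm (R : Type) [CommRing R] (ℓ : ℕ) (I J K : Finset ℕ) : RRing R (Iset (ℓ + 1)) :=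
  reD R (Iset (ℓ + 1)) I J (K ∪ {ℓ + 1})

/-- The homomorphism `F_{J,K} : R^{cx}_{{nd}⊔[ℓ]} → R_{0,[ℓ]}`,
`D_{J',K'} ↦ (-1)^{|K|} ε_{J∩K',K∩K'} ℝD_{J'-{nd};J∩K',K∩K'}` for `nd ∈ J'`; here `nd = 0`. -/
def FJKre (R : Type) [CommRing R] (ℓ : ℕ) (J K : Finset ℕ) :
    CxRing R (insert 0 (Iset ℓ)) →ₐ[R] RRing R (Iset ℓ) :=
  aeval fun i =>
    ((-1 : ℤ) ^ K.card *
        epsm (J ∩ (insert 0 (Iset ℓ) \ i.1)) (K ∩ (insert 0 (Iset ℓ) \ i.1))) •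
      reD R (Iset ℓ) (i.1.erase 0)
        (J ∩ (insert 0 (Iset ℓ) \ i.1)) (K ∩ (insert 0 (Iset ℓ) \ i.1))

/-- The homomorphism `F²_{I;J,K} : R^{cx}_{{nd}⊔(J∪K)} → R_{0,[ℓ]}`,
`D_{J',K'} ↦ (-1)^{|K|} ε_{J∩K',K∩K'} ℝD_{I∪(J'-{nd});J∩K',K∩K'}` for `nd ∈ J'`;
here `nd = 0`. -/
def F2IJK (R : Type) [CommRing R] (ℓ : ℕ) (I J K : Finset ℕ) :
    CxRing R (insert 0 (J ∪ K)) →ₐ[R] RRing R (Iset ℓ) :=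
  aeval fun i =>
    ((-1 : ℤ) ^ K.card *
        epsm (J ∩ (insert 0 (J ∪ K) \ i.1)) (K ∩ (insert 0 (J ∪ K) \ i.1))) •
      reD R (Iset ℓ) (I ∪ i.1.erase 0)
        (J ∩ (insert 0 (J ∪ K) \ i.1)) (K ∩ (insert 0 (J ∪ K) \ i.1))

/-- `nd` for `{nd} ⊔ I`, identified with `min (ℤ⁺ - I)`. -/
def ndOf (I : Finset ℕ) : ℕ := sInf {n : ℕ | 0 < n ∧ n ∉ I}

/-- The homomorphism `F¹_{I;J,K} : R_{0,{nd}⊔I} → R_{0,[ℓ]}` with `nd = min (ℤ⁺ - I)`. -/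
def F1IJK (R : Type) [CommRing R] (ℓ : ℕ) (I J K : Finset ℕ) :
    RRing R (insert (ndOf I) I) →ₐ[R] RRing R (Iset ℓ) :=
  aeval fun ix =>
    match ix with
    | Sum.inl e =>
        if ndOf I ∈ e.1 then
          reE R (Iset ℓ) (J ∪ e.1.erase (ndOf I)) (K ∪ (insert (ndOf I) I \ e.1))
        else
          reE R (Iset ℓ) (J ∪ (insert (ndOf I) I \ e.1).erase (ndOf I)) (K ∪ e.1)
    | Sum.inr d =>
        if ndOf I ∈ d.1.1 then
          reD R (Iset ℓ) (d.1.1.erase (ndOf I) ∪ J ∪ K) d.1.2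
            ((insert (ndOf I) I \ d.1.1) \ d.1.2)
        else if ndOf I ∈ d.1.2 then
          reD R (Iset ℓ) d.1.1 (J ∪ d.1.2.erase (ndOf I))
            (K ∪ ((insert (ndOf I) I \ d.1.1) \ d.1.2))
        else
          reD R (Iset ℓ) d.1.1
            (J ∪ ((insert (ndOf I) I \ d.1.1) \ d.1.2).erase (ndOf I)) (K ∪ d.1.2)

/-- The homomorphism `F_{I;J,K} : R_{0,{nd}⊔I} ⊗ R^{cx}_{{nd}⊔(J∪K)} → R_{0,[ℓ]}`
induced by `F¹_{I;J,K}` and `F²_{I;J,K}`. -/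
def FIJK (R : Type) [CommRing R] (ℓ : ℕ) (I J K : Finset ℕ) :
    TensorProduct R (RRing R (insert (ndOf I) I)) (CxRing R (insert 0 (J ∪ K))) →ₐ[R]
      RRing R (Iset ℓ) :=
  Algebra.TensorProduct.productMap (F1IJK R ℓ I J K) (F2IJK R ℓ I J K)

/-! ### Auxiliary lemmas for Statement 7 -/

lemma epsm_swap' {J K : Finset ℕ} (h : J.min ≠ K.min) : epsm K J = - epsm J K := by
  rcases lt_or_gt_of_ne h with hlt | hlt
  · rw [epsm, epsm, if_neg (not_le.mpr hlt), if_pos hlt.le]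
  · rw [epsm, epsm, if_pos hlt.le, if_neg (not_le.mpr hlt)]; norm_num

lemma reD_swap' (R : Type) [CommRing R] (S I J K : Finset ℕ) (h : J.min ≠ K.min) :
    reD R S I K J = reD R S I J K := by
  rw [reD, reD, Finset.union_comm K J]
  have h2 : (if K.min ≤ J.min then reXd R S I K else reXd R S I J)
      = (if J.min ≤ K.min then reXd R S I J else reXd R S I K) := by
    rcases lt_or_gt_of_ne h with hlt | hlt
    · rw [if_neg (not_le.mpr hlt), if_pos hlt.le]
    · rw [if_pos hlt.le, if_neg (not_le.mpr hlt)]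
  rw [h2]
  exact if_congr (and_congr_right fun _ => and_congr_left fun _ => disjoint_comm) rfl rfl

lemma min_ne_of_disjoint' {J K : Finset ℕ} (hd : Disjoint J K) (hne : (J ∪ K).Nonempty) :
    J.min ≠ K.min := by
  rcases J.eq_empty_or_nonempty with hJ | hJ
  · subst hJ
    have hK : K ≠ ∅ := by
      intro h; rw [h] at hne; simp at hne
    intro h
    exact hK (Finset.min_eq_top.mp ((h ▸ Finset.min_empty).symm).symm)
  rcases K.eq_empty_or_nonempty with hK | hK
  · subst hK
    intro h
    exact (Finset.min_eq_top.mp (h ▸ rfl : J.min = ⊤) ▸ hJ).ne_empty rfl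
  · intro h
    have h1 := J.min'_mem hJ
    have h2 := K.min'_mem hK
    have : J.min' hJ = K.min' hK := by
      have := (Finset.coe_min' hJ).trans (h.trans (Finset.coe_min' hK).symm)
      exact_mod_cast this
    exact Finset.disjoint_left.mp hd h1 (this ▸ h2)

lemma relE_eq' (R : Type) [CommRing R] (S : Finset ℕ) (x y z : ℕ) :
    relE R S x y z = ∑ I ∈ S.powerset, ∑ J ∈ (S \ I).powerset,
      ((if 1 ≤ I.card ∧ 2 ≤ (S \ I).card ∧ x ∈ J ∧ y ∈ J ∧ z ∈ I
          then epsm J ((S \ I) \ J) • reD R S I J ((S \ I) \ J) else 0)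
        - (if 1 ≤ I.card ∧ 2 ≤ (S \ I).card ∧ x ∈ J ∧ z ∈ J ∧ y ∈ I
          then epsm J ((S \ I) \ J) • reD R S I J ((S \ I) \ J) else 0)
        - (if 1 ≤ I.card ∧ 2 ≤ (S \ I).card ∧ x ∈ I ∧ y ∈ J ∧ z ∈ (S \ I) \ J
          then epsm J ((S \ I) \ J) • reD R S I J ((S \ I) \ J) else 0)) := by
  simp only [relE, Finset.sum_sub_distrib]

lemma relE_key' (R : Type) [CommRing R] (S : Finset ℕ) (s₀ a b c : ℕ)
    (hs₀ : s₀ ∈ S) (ha : a ∈ S) (hb : b ∈ S) (hc : c ∈ S) :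
    relE R S a b c = relE R S s₀ b c + relE R S b a s₀ - relE R S c a s₀ := by
  rw [← sub_eq_zero, relE_eq', relE_eq', relE_eq', relE_eq']
  simp only [← Finset.sum_add_distrib, ← Finset.sum_sub_distrib]
  refine Finset.sum_eq_zero fun I _ => ?_
  refine Finset.sum_involution (fun J _ => (S \ I) \ J) ?_ ?_
    (fun J _ => Finset.mem_powerset.mpr Finset.sdiff_subset)
    (fun J hJ => Finset.sdiff_sdiff_eq_self (Finset.mem_powerset.mp hJ))
  · intro J hJ
    have hJ' : J ⊆ S \ I := Finset.mem_powerset.mp hJ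
    simp only [Finset.sdiff_sdiff_eq_self hJ']
    by_cases h1 : 1 ≤ I.card
    swap
    · simp [h1]
    by_cases h2 : 2 ≤ (S \ I).card
    swap
    · simp [h2]
    have hmin : J.min ≠ ((S \ I) \ J).min :=
      min_ne_of_disjoint' Finset.disjoint_sdiff
        (by rw [Finset.union_sdiff_of_subset hJ']; exact Finset.card_pos.mp (by omega))
    have he : epsm ((S \ I) \ J) J • reD R S I ((S \ I) \ J) J
        = -(epsm J ((S \ I) \ J) • reD R S I J ((S \ I) \ J)) := by
      rw [epsm_swap' hmin, reD_swap' R S I _ _ hmin, neg_smul]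
    rw [he]
    have tri : ∀ x ∈ S, (x ∈ I ∧ x ∉ J ∧ x ∉ (S \ I) \ J)
        ∨ (x ∉ I ∧ x ∈ J ∧ x ∉ (S \ I) \ J) ∨ (x ∉ I ∧ x ∉ J ∧ x ∈ (S \ I) \ J) := by
      intro x hx
      by_cases hxI : x ∈ I
      · exact Or.inl ⟨hxI, fun hxJ => (Finset.mem_sdiff.mp (hJ' hxJ)).2 hxI,
          fun hxK => (Finset.mem_sdiff.mp (Finset.mem_sdiff.mp hxK).1).2 hxI⟩
      by_cases hxJ : x ∈ J
      · exact Or.inr (Or.inl ⟨hxI, hxJ, fun hxK => (Finset.mem_sdiff.mp hxK).2 hxJ⟩)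
      · exact Or.inr (Or.inr ⟨hxI, hxJ,
          Finset.mem_sdiff.mpr ⟨Finset.mem_sdiff.mpr ⟨hx, hxI⟩, hxJ⟩⟩)
    rcases tri a ha with ⟨a1, a2, a3⟩ | ⟨a1, a2, a3⟩ | ⟨a1, a2, a3⟩ <;>
      rcases tri b hb with ⟨b1, b2, b3⟩ | ⟨b1, b2, b3⟩ | ⟨b1, b2, b3⟩ <;>
      rcases tri c hc with ⟨c1, c2, c3⟩ | ⟨c1, c2, c3⟩ | ⟨c1, c2, c3⟩ <;>
      rcases tri s₀ hs₀ with ⟨s1, s2, s3⟩ | ⟨s1, s2, s3⟩ | ⟨s1, s2, s3⟩ <;>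
      simp [h1, h2, a1, a2, a3, b1, b2, b3, c1, c2, c3, s1, s2, s3]
  · intro J hJ hf hEq
    apply hf
    have hEq' : (S \ I) \ J = J := hEq
    have hJ0 : J = ∅ := by
      have : Disjoint J J := by
        conv_rhs => rw [← hEq']
        exact Finset.disjoint_sdiff
      simpa using this
    have hT : S \ I = ∅ := by
      rw [hJ0, Finset.sdiff_empty] at hEq'; exact hEq'
    simp [hT]

/-- The identity `E^S_{abc} = E^S_{s₀bc} + E^S_{bas₀} − E^S_{cas₀}` and the
consequence that all the elements `E^S_{abc}` lie in the R-linear span of those in which `s₀`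
occurs among the indices. -/
theorem stmt7 (R : Type) [CommRing R] (S : Finset ℕ) (s₀ a b c : ℕ)
    (hs₀ : s₀ ∈ S) (ha : a ∈ S) (hb : b ∈ S) (hc : c ∈ S)
    (has : a ≠ s₀) (hbs : b ≠ s₀) (hcs : c ≠ s₀)
    (hab : a ≠ b) (hac : a ≠ c) (hbc : b ≠ c) :
    relE R S a b c = relE R S s₀ b c + relE R S b a s₀ - relE R S c a s₀ ∧
    ∀ a' b' c' : ℕ, a' ∈ S → b' ∈ S → c' ∈ S → a' ≠ b' → a' ≠ c' → b' ≠ c' →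
      relE R S a' b' c' ∈ Submodule.span R
        {x : RRing R S | ∃ a'' b'' c'' : ℕ, a'' ∈ S ∧ b'' ∈ S ∧ c'' ∈ S ∧
          a'' ≠ b'' ∧ a'' ≠ c'' ∧ b'' ≠ c'' ∧ (s₀ = a'' ∨ s₀ = b'' ∨ s₀ = c'') ∧
          x = relE R S a'' b'' c''} := by
  refine ⟨relE_key' R S s₀ a b c hs₀ ha hb hc, ?_⟩
  intro a' b' c' ha' hb' hc' hab' hac' hbc'
  by_cases h : s₀ = a' ∨ s₀ = b' ∨ s₀ = c'
  · exact Submodule.subset_span ⟨a', b', c', ha', hb', hc', hab', hac', hbc', h, rfl⟩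
  · push_neg at h
    obtain ⟨h1, h2, h3⟩ := h
    rw [relE_key' R S s₀ a' b' c' hs₀ ha' hb' hc']
    refine Submodule.sub_mem _ (Submodule.add_mem _ ?_ ?_) ?_
    · exact Submodule.subset_span ⟨s₀, b', c', hs₀, hb', hc', h2, h3, hbc', Or.inl rfl, rfl⟩
    · exact Submodule.subset_span ⟨b', a', s₀, hb', ha', hs₀, hab'.symm, h2.symm, h1.symm,
        Or.inr (Or.inr rfl), rfl⟩
    · exact Submodule.subset_span ⟨c', a', s₀, hc', ha', hs₀, hac'.symm, h3.symm, h1.symm,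
        Or.inr (Or.inr rfl), rfl⟩

end
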